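/- Stationary kink profiles for the saturated aggregation equation: let α, C, D > 0 and l ≥ 0, and define ρ_∞ : ℝ → ℝ by ρ_∞(x) = α·exp(−(C/(2D))·max(x² − l², 0)). Then for every x ∈ ℝ with |x| ≠ l, the function Φ(y) = D·log(ρ_∞(y)) + (C/2)·y² is differentiable at x and the flux vanishes: ρ_∞(x)·(α − ρ_∞(x))·Φ'(x) = 0. (For |x| < l one has ρ_∞(x) = α so α − ρ_∞(x) = 0, while for |x| > l the function Φ is locally constant equal to D·log α + C·l²/2.) -/
import Mathlib


/-- The kink stationary profile `ρ_∞(x) = α·exp(−(C/(2D))·(x² − l²)⁺)`. -/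
noncomputable def rhoInf (α C D l : ℝ) (x : ℝ) : ℝ :=
  α * Real.exp (-(C / (2 * D)) * max (x ^ 2 - l ^ 2) 0)

/-- The potential `Φ(y) = D·log(ρ_∞(y)) + (C/2)·y²`. -/
noncomputable def kinkPotential (α C D l : ℝ) (y : ℝ) : ℝ :=
  D * Real.log (rhoInf α C D l y) + C / 2 * y ^ 2

/-- The kink profile is a stationary state of the saturated aggregation equation:
away from `|x| = l` the potential `Φ` is differentiable and the flux
`ρ_∞·(α − ρ_∞)·Φ'` vanishes. -/
theorem kink_profile_stationary (α C D l : ℝ)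
    (hα : 0 < α) (hC : 0 < C) (hD : 0 < D) (hl : 0 ≤ l) :
    ∀ x : ℝ, |x| ≠ l →
      DifferentiableAt ℝ (kinkPotential α C D l) x ∧
        rhoInf α C D l x * (α - rhoInf α C D l x) * deriv (kinkPotential α C D l) x = 0 := by
  intro x hx
  rcases lt_or_gt_of_ne hx with h | h
  · -- |x| < l : ρ = α locally
    have hs : ∀ᶠ y in nhds x, |y| < l :=
      (isOpen_lt continuous_abs continuous_const).eventually_mem h
    have heq : kinkPotential α C D l =ᶠ[nhds x]
        fun y => D * Real.log α + C / 2 * y ^ 2 := by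
      filter_upwards [hs] with y hy
      have h1 : y ^ 2 - l ^ 2 ≤ 0 := by nlinarith [abs_nonneg y, sq_abs y, sq_abs l]
      simp [kinkPotential, rhoInf, max_eq_right h1]
    have hd : DifferentiableAt ℝ (fun y : ℝ => D * Real.log α + C / 2 * y ^ 2) x := by
      fun_prop
    have hρ : rhoInf α C D l x = α := by
      have h1 : x ^ 2 - l ^ 2 ≤ 0 := by nlinarith [abs_nonneg x, sq_abs x, sq_abs l]
      simp [rhoInf, max_eq_right h1]
    exact ⟨hd.congr_of_eventuallyEq heq, by rw [hρ]; ring⟩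
  · -- |x| > l : Φ locally constant
    have hs : ∀ᶠ y in nhds x, l < |y| :=
      (isOpen_lt continuous_const continuous_abs).eventually_mem h
    have heq : kinkPotential α C D l =ᶠ[nhds x]
        fun _ => D * Real.log α + C / 2 * l ^ 2 := by
      filter_upwards [hs] with y hy
      have h1 : 0 ≤ y ^ 2 - l ^ 2 := by nlinarith [abs_nonneg y, sq_abs y, sq_abs l]
      have hα' : α ≠ 0 := ne_of_gt hα
      simp only [kinkPotential, rhoInf, max_eq_left h1,
        Real.log_mul hα' (Real.exp_ne_zero _), Real.log_exp]
      field_simp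
      ring
    have hd : DifferentiableAt ℝ (fun _ : ℝ => D * Real.log α + C / 2 * l ^ 2) x :=
      differentiableAt_const _
    refine ⟨hd.congr_of_eventuallyEq heq, ?_⟩
    have : deriv (kinkPotential α C D l) x = 0 := by
      rw [Filter.EventuallyEq.deriv_eq heq, deriv_const]
    rw [this]; ring
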